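/- (Closed-form Lorentzian centroid.) Let c>0, let x_1,…,x_m be points on the forward hyperboloid 𝕃^n_{-c}, let ν_1,…,ν_m be nonnegative weights with ν_1+…+ν_m > 0, and set u = Σ_{i=1}^m ν_i x_i. Then the point μ = u / (√c·√(−⟨u,u⟩_L)) lies on 𝕃^n_{-c}, and μ minimizes the weighted sum of squared Lorentzian distances over 𝕃^n_{-c}: for every μ' ∈ 𝕃^n_{-c}, Σ_{i=1}^m ν_i·d_L²(x_i, μ) ≤ Σ_{i=1}^m ν_i·d_L²(x_i, μ'). -/

import Mathlib

/-- **Closed-form Lorentzian centroid.**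
Let `c > 0`, let `x_1, …, x_m` lie on the forward hyperboloid `𝕃^n_{-c}`,
let `ν_1, …, ν_m ≥ 0` with positive sum, and set `u = Σ_i ν_i x_i`.  Then
`μ = u / (√c·√(-⟨u,u⟩_L))` lies on `𝕃^n_{-c}` and minimizes the weighted sum
of squared Lorentzian distances `Σ_i ν_i·d_L²(x_i, ·)` over `𝕃^n_{-c}`, where
`d_L²(x,y) = -(x₀-y₀)² + ‖x_s-y_s‖²`. -/
theorem lorentzian_centroid (c : ℝ) (hc : 0 < c) (n m : ℕ)
    (x0 : Fin m → ℝ) (xs : Fin m → Fin n → ℝ)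
    (hx : ∀ i, -(x0 i) ^ 2 + ∑ j, (xs i j) ^ 2 = -(1 / c))
    (hx0 : ∀ i, 0 < x0 i)
    (ν : Fin m → ℝ) (hν : ∀ i, 0 ≤ ν i) (hνsum : 0 < ∑ i, ν i)
    (u0 : ℝ) (us : Fin n → ℝ)
    (hu0 : u0 = ∑ i, ν i * x0 i) (hus : ∀ j, us j = ∑ i, ν i * xs i j)
    (μ0 : ℝ) (μs : Fin n → ℝ)
    (hμ0 : μ0 = u0 / (Real.sqrt c * Real.sqrt (-(-u0 ^ 2 + ∑ j, (us j) ^ 2))))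
    (hμs : ∀ j, μs j =
      us j / (Real.sqrt c * Real.sqrt (-(-u0 ^ 2 + ∑ j, (us j) ^ 2)))) :
    ((-μ0 ^ 2 + ∑ j, (μs j) ^ 2 = -(1 / c)) ∧ 0 < μ0) ∧
      ∀ μ0' : ℝ, ∀ μs' : Fin n → ℝ,
        (-μ0' ^ 2 + ∑ j, (μs' j) ^ 2 = -(1 / c)) → 0 < μ0' →
        (∑ i, ν i * (-(x0 i - μ0) ^ 2 + ∑ j, (xs i j - μs j) ^ 2))
          ≤ ∑ i, ν i * (-(x0 i - μ0') ^ 2 + ∑ j, (xs i j - μs' j) ^ 2) := by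
  -- choose an index with positive weight
  obtain ⟨i0, -, hi0⟩ : ∃ i ∈ Finset.univ, 0 < ν i := by
    by_contra h
    push_neg at h
    have : (∑ i, ν i) ≤ 0 := Finset.sum_nonpos fun i hi => h i hi
    linarith
  have hu0pos : 0 < u0 := by
    rw [hu0]
    exact Finset.sum_pos' (fun i _ => mul_nonneg (hν i) (hx0 i).le)
      ⟨i0, Finset.mem_univ _, mul_pos hi0 (hx0 i0)⟩
  set Q : ℝ := -u0 ^ 2 + ∑ j, (us j) ^ 2 with hQdef
  -- `Q < 0` : the spatial norm of `u` is strictly less than `u0`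
  have hQneg : Q < 0 := by
    set s : Fin m → ℝ := fun i => Real.sqrt (∑ j, (xs i j) ^ 2) with hs
    have hs2 : ∀ i, (s i) ^ 2 = ∑ j, (xs i j) ^ 2 := fun i =>
      Real.sq_sqrt (Finset.sum_nonneg fun j _ => sq_nonneg _)
    have hsnn : ∀ i, 0 ≤ s i := fun i => Real.sqrt_nonneg _
    have hsx : ∀ i, s i < x0 i := by
      intro i
      have h1 := hx i
      have h2 := hs2 i
      have h3 := hx0 i
      have h4 := hsnn i
      nlinarith [one_div_pos.2 hc]
    -- vector norm inequality
    set v : Fin m → EuclideanSpace ℝ (Fin n) := fun i => WithLp.toLp 2 (xs i) with hv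
    have hnv : ∀ i, ‖v i‖ = s i := by
      intro i
      rw [EuclideanSpace.norm_eq]
      simp [hv, hs, sq_abs]
    set w : EuclideanSpace ℝ (Fin n) := ∑ i, ν i • v i with hw
    have hwj : ∀ j, w j = us j := by
      intro j
      rw [hw, WithLp.ofLp_sum, Finset.sum_apply, hus j]
      rfl
    have hnw : ‖w‖ = Real.sqrt (∑ j, (us j) ^ 2) := by
      rw [EuclideanSpace.norm_eq]
      congr 1
      refine Finset.sum_congr rfl fun j _ => ?_
      rw [hwj j, Real.norm_eq_abs, sq_abs]
    have htri : ‖w‖ ≤ ∑ i, ν i * s i := by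
      calc ‖w‖ ≤ ∑ i, ‖ν i • v i‖ := norm_sum_le _ _
        _ = ∑ i, ν i * s i := by
            refine Finset.sum_congr rfl fun i _ => ?_
            rw [norm_smul, hnv i, Real.norm_eq_abs, abs_of_nonneg (hν i)]
    have hlt : ∑ i, ν i * s i < u0 := by
      rw [hu0]
      exact Finset.sum_lt_sum (fun i _ => mul_le_mul_of_nonneg_left (hsx i).le (hν i))
        ⟨i0, Finset.mem_univ _, mul_lt_mul_of_pos_left (hsx i0) hi0⟩
    have hw2 : ‖w‖ ^ 2 = ∑ j, (us j) ^ 2 := by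
      rw [hnw, Real.sq_sqrt (Finset.sum_nonneg fun j _ => sq_nonneg _)]
    have hwn : 0 ≤ ‖w‖ := norm_nonneg _
    have : ∑ j, (us j) ^ 2 < u0 ^ 2 := by nlinarith
    rw [hQdef]; linarith
  have hnQ : 0 < -Q := by linarith
  clear_value Q
  set D : ℝ := Real.sqrt c * Real.sqrt (-Q) with hD
  have hDpos : 0 < D := mul_pos (Real.sqrt_pos.2 hc) (Real.sqrt_pos.2 hnQ)
  clear_value D
  have hD2 : D ^ 2 = c * (-Q) := by
    rw [hD, mul_pow, Real.sq_sqrt hc.le, Real.sq_sqrt hnQ.le]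
  -- membership of μ
  have hsumdiv : ∑ j, (us j / D) ^ 2 = (∑ j, (us j) ^ 2) / D ^ 2 := by
    rw [Finset.sum_div]
    exact Finset.sum_congr rfl fun j _ => div_pow _ _ _
  have hmem : -μ0 ^ 2 + ∑ j, (μs j) ^ 2 = -(1 / c) := by
    have e1 : -μ0 ^ 2 + ∑ j, (μs j) ^ 2 = Q / D ^ 2 := by
      simp only [hμ0, hμs]
      rw [hsumdiv, div_pow, hQdef]
      field_simp
    rw [e1, hD2]
    have hQ0 : Q ≠ 0 := ne_of_lt hQneg
    field_simp
  have hμ0pos : 0 < μ0 := by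
    rw [hμ0]; exact div_pos hu0pos hDpos
  -- reverse Cauchy–Schwarz bound
  have hrcs : ∀ p : ℝ, ∀ ps : Fin n → ℝ, (-p ^ 2 + ∑ j, (ps j) ^ 2 = -(1 / c)) → 0 < p →
      Real.sqrt (-Q) * Real.sqrt (1 / c) ≤ u0 * p - ∑ j, us j * ps j := by
    intro p ps hmemp hppos
    set a : ℝ := Real.sqrt (∑ j, (us j) ^ 2) with ha
    set b : ℝ := Real.sqrt (∑ j, (ps j) ^ 2) with hb
    have ha2 : a ^ 2 = ∑ j, (us j) ^ 2 := Real.sq_sqrt (Finset.sum_nonneg fun j _ => sq_nonneg _)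
    have hb2 : b ^ 2 = ∑ j, (ps j) ^ 2 := Real.sq_sqrt (Finset.sum_nonneg fun j _ => sq_nonneg _)
    have hann : 0 ≤ a := Real.sqrt_nonneg _
    have hbnn : 0 ≤ b := Real.sqrt_nonneg _
    clear_value a b
    have hcpos : (0:ℝ) < 1 / c := one_div_pos.2 hc
    have hQa : -Q = u0 ^ 2 - a ^ 2 := by rw [ha2, hQdef]; ring
    have h1c : 1 / c = p ^ 2 - b ^ 2 := by rw [hb2]; linarith
    have hau : a < u0 := by nlinarith
    have hbp : b < p := by nlinarith
    have hcs : ∑ j, us j * ps j ≤ a * b := by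
      have h1 := Finset.sum_mul_sq_le_sq_mul_sq Finset.univ us ps
      have h2 : (∑ j, us j * ps j) ^ 2 ≤ (a * b) ^ 2 := by
        rw [mul_pow, ha2, hb2]; exact h1
      calc ∑ j, us j * ps j ≤ |∑ j, us j * ps j| := le_abs_self _
        _ ≤ |a * b| := by
            rw [← Real.sqrt_sq_eq_abs, ← Real.sqrt_sq_eq_abs]
            exact Real.sqrt_le_sqrt h2
        _ = a * b := abs_of_nonneg (mul_nonneg hann hbnn)
    have habnn : 0 ≤ u0 * p - a * b := by
      have : a * b ≤ u0 * p :=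
        mul_le_mul hau.le hbp.le hbnn (le_trans hann hau.le)
      linarith
    have hPR : Real.sqrt (-Q) * Real.sqrt (1 / c) ≤ u0 * p - a * b := by
      rw [← Real.sqrt_mul hnQ.le]
      have h3 : (-Q) * (1 / c) ≤ (u0 * p - a * b) ^ 2 := by
        rw [hQa, h1c]
        have hid : (u0 ^ 2 - a ^ 2) * (p ^ 2 - b ^ 2)
            = (u0 * p - a * b) ^ 2 - (u0 * b - a * p) ^ 2 := by ring
        linarith [sq_nonneg (u0 * b - a * p)]
      calc Real.sqrt ((-Q) * (1 / c)) ≤ Real.sqrt ((u0 * p - a * b) ^ 2) := Real.sqrt_le_sqrt h3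
        _ = u0 * p - a * b := by rw [Real.sqrt_sq habnn]
    linarith
  -- value at μ
  have hscne : Real.sqrt c ≠ 0 := ne_of_gt (Real.sqrt_pos.2 hc)
  have hsqQ : Real.sqrt (-Q) * Real.sqrt (-Q) = -Q := Real.mul_self_sqrt hnQ.le
  have hfμ : u0 * μ0 - ∑ j, us j * μs j = Real.sqrt (-Q) * Real.sqrt (1 / c) := by
    have h1 : ∑ j, us j * μs j = (∑ j, (us j) ^ 2) / D := by
      rw [Finset.sum_div]
      refine Finset.sum_congr rfl fun j _ => ?_
      rw [hμs j]; ring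
    have hsum : ∑ j, (us j) ^ 2 = u0 ^ 2 + Q := by rw [hQdef]; ring
    have hDne : D ≠ 0 := ne_of_gt hDpos
    have h2 : Real.sqrt (1 / c) = 1 / Real.sqrt c := by
      rw [one_div, one_div, Real.sqrt_inv]
    have e : u0 * (u0 / D) - (u0 ^ 2 + Q) / D = (-Q) / D := by
      field_simp
      ring
    have e2 : Real.sqrt (-Q) * (1 / Real.sqrt c) = Real.sqrt (-Q) / Real.sqrt c := by ring
    rw [h1, hμ0, hsum, e, h2, e2, div_eq_div_iff hDne hscne, hD]
    linear_combination (-Real.sqrt c) * hsqQ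
  -- expansion of the objective
  have hexp : ∀ p : ℝ, ∀ ps : Fin n → ℝ, (-p ^ 2 + ∑ j, (ps j) ^ 2 = -(1 / c)) →
      ∑ i, ν i * (-(x0 i - p) ^ 2 + ∑ j, (xs i j - ps j) ^ 2)
        = -(2 / c) * (∑ i, ν i) + 2 * (u0 * p - ∑ j, us j * ps j) := by
    intro p ps hmemp
    have hterm : ∀ i, -(x0 i - p) ^ 2 + ∑ j, (xs i j - ps j) ^ 2
        = -(2 / c) + 2 * (x0 i * p - ∑ j, xs i j * ps j) := by
      intro i
      have h1 : ∑ j, (xs i j - ps j) ^ 2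
          = ∑ j, (xs i j) ^ 2 - 2 * ∑ j, xs i j * ps j + ∑ j, (ps j) ^ 2 := by
        rw [Finset.mul_sum, ← Finset.sum_sub_distrib, ← Finset.sum_add_distrib]
        exact Finset.sum_congr rfl fun j _ => by ring
      rw [h1]
      linear_combination hx i + hmemp
    have hswap : ∑ i, ν i * ∑ j, xs i j * ps j = ∑ j, us j * ps j := by
      simp_rw [Finset.mul_sum]
      rw [Finset.sum_comm]
      refine Finset.sum_congr rfl fun j _ => ?_
      rw [hus j, Finset.sum_mul]
      exact Finset.sum_congr rfl fun i _ => by ring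
    calc ∑ i, ν i * (-(x0 i - p) ^ 2 + ∑ j, (xs i j - ps j) ^ 2)
        = ∑ i, (ν i * (-(2 / c)) + (2 * p) * (ν i * x0 i)
            - 2 * (ν i * ∑ j, xs i j * ps j)) := by
          refine Finset.sum_congr rfl fun i _ => ?_
          rw [hterm i]; ring
      _ = (∑ i, ν i) * (-(2 / c)) + (2 * p) * (∑ i, ν i * x0 i)
            - 2 * ∑ i, ν i * ∑ j, xs i j * ps j := by
          rw [Finset.sum_sub_distrib, Finset.sum_add_distrib, ← Finset.sum_mul,
            ← Finset.mul_sum, ← Finset.mul_sum]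
      _ = -(2 / c) * (∑ i, ν i) + 2 * (u0 * p - ∑ j, us j * ps j) := by
          rw [hswap, ← hu0]; ring
  refine ⟨⟨hmem, hμ0pos⟩, ?_⟩
  intro p ps hmemp hppos
  rw [hexp μ0 μs hmem, hexp p ps hmemp]
  have h1 := hrcs p ps hmemp hppos
  linarith [hfμ]
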